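/- Let s ≥ 2 and let 1 ≤ k_1 ≤ k_2 ≤ ⋯ ≤ k_s < n and 1 < l_1 ≤ l_2 ≤ ⋯ ≤ l_s ≤ n satisfy k_j < l_j and l_j − k_j + 1 ≥ m for all j. Let f' = X_{1c_1}X_{2c_2}⋯X_{mc_m} be a diagonal monomial of Y_{k_1 l_1} and set c_0 = k_1 − 1. Suppose f and p are monomials in K[X] and, for each j, g_j is a diagonal monomial of Y_{k_j l_j}, such that f·f' = g_1 g_2 ⋯ g_s · p. Then at least one of the following holds: (i) f is divisible by some variable X_{ib} with 1 ≤ i ≤ m and c_{i−1} < b < c_i; or (ii) there exist diagonal monomials h_j of Y_{k_j l_j}, 1 ≤ j ≤ s, such that g_1 g_2 ⋯ g_s = h_1 h_2 ⋯ h_s and gcd(f', g_1 g_2 ⋯ g_s) divides h_1. -/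

import Mathlib

open MvPolynomial

/-- The exponent vector of the diagonal monomial with column sequence `c`
(rows `1,…,m`, row `i` contributing the variable `X (i, c i)`). -/
noncomputable def expVec (m : ℕ) (c : ℕ → ℕ) : (ℕ × ℕ) →₀ ℕ :=
  ∑ i ∈ Finset.Icc 1 m, Finsupp.single (i, c i) 1

/-- The diagonal monomial `X_{1 c₁} X_{2 c₂} ⋯ X_{m c_m}`. -/
noncomputable def diagMon (K : Type*) [Field K] (m : ℕ) (c : ℕ → ℕ) :
    MvPolynomial (ℕ × ℕ) K :=
  ∏ i ∈ Finset.Icc 1 m, MvPolynomial.X (i, c i)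

/-- `tauGt a b` : the monomial with exponent vector `a` is strictly larger than the one
with exponent vector `b` in the lexicographic monomial order τ induced by
`X 11 > X 12 > ⋯ > X 1n > X 21 > ⋯ > X mn` : at the most significant variable where
they differ (i.e. the lexicographically smallest index pair), `a` has the bigger exponent. -/
def tauGt (a b : (ℕ × ℕ) →₀ ℕ) : Prop :=
  ∃ p : ℕ × ℕ, b p < a p ∧
    ∀ q : ℕ × ℕ, (q.1 < p.1 ∨ (q.1 = p.1 ∧ q.2 < p.2)) → a q = b q

/-- `c` is the column sequence of a diagonal monomial of the submatrix `Y_{kl}`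
(columns `k` through `l`): strictly increasing on `1,…,m` with values in `[k,l]`. -/
def IsDiagSeq (m k l : ℕ) (c : ℕ → ℕ) : Prop :=
  (∀ i, 1 ≤ i → i < m → c i < c (i + 1)) ∧ k ≤ c 1 ∧ c m ≤ l

/-- The ideal `J_{kl}` of `K[X]` generated by all diagonal monomials of `Y_{kl}`. -/
noncomputable def Jkl (K : Type*) [Field K] (m k l : ℕ) : Ideal (MvPolynomial (ℕ × ℕ) K) :=
  Ideal.span {g | ∃ c, IsDiagSeq m k l c ∧ g = diagMon K m c}

/-- The exponent vector of the gcd of two monomials: pointwise minimum. -/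
noncomputable def gcdExp (A B : (ℕ × ℕ) →₀ ℕ) : (ℕ × ℕ) →₀ ℕ :=
  Finsupp.zipWith min (by simp) A B

/-- sorted value ≤ a iff enough elements are ≤ a. -/
lemma sortedLe_iff {s : ℕ} (f : Fin s → ℕ) (a : ℕ) (j : Fin s) :
    f (Tuple.sort f j) ≤ a ↔ (j : ℕ) < Fintype.card {i // f i ≤ a} := by
  classical
  have h := Tuple.lt_card_le_iff_apply_le_of_monotone (f := f ∘ Tuple.sort f) (a := a)
    (Tuple.monotone_sort f) (j := j)
  rw [← Fintype.card_subtype] at h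
  have hcard : Fintype.card {i // (f ∘ Tuple.sort f) i ≤ a}
      = Fintype.card {i // f i ≤ a} :=
    Fintype.card_congr ((Tuple.sort f).subtypeEquiv (fun i => Iff.rfl))
  rw [hcard] at h
  exact h.symm

lemma reindexIcc {M : Type*} [AddCommMonoid M] (s : ℕ) (F : ℕ → M) :
    ∑ j ∈ Finset.Icc 1 s, F j = ∑ t : Fin s, F (t.1 + 1) := by
  rw [← Finset.Ico_add_one_right_eq_Icc, Finset.sum_Ico_eq_sum_range,
    Fin.sum_univ_eq_sum_range (fun t => F (t + 1)) s]
  simp [Nat.add_comm]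

lemma expVec_apply (m : ℕ) (d : ℕ → ℕ) (i b : ℕ) :
    expVec m d (i, b) = if 1 ≤ i ∧ i ≤ m ∧ d i = b then 1 else 0 := by
  classical
  rw [expVec, Finsupp.finset_sum_apply]
  by_cases h : 1 ≤ i ∧ i ≤ m ∧ d i = b
  · rw [if_pos h]
    rw [Finset.sum_eq_single i]
    · simp [h.2.2]
    · intro i' _ hne
      simp [Finsupp.single_apply, Prod.ext_iff, hne]
    · intro hni
      exact absurd (Finset.mem_Icc.mpr ⟨h.1, h.2.1⟩) hni
  · rw [if_neg h]
    apply Finset.sum_eq_zero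
    intro i' hi'
    rw [Finset.mem_Icc] at hi'
    rw [Finsupp.single_apply]
    rw [if_neg]
    intro he
    rcases Prod.ext_iff.mp he with ⟨h1, h2⟩
    subst h1
    exact h ⟨hi'.1, hi'.2, h2⟩

/-- Let `s ≥ 2`, `1 ≤ k₁ ≤ ⋯ ≤ k_s < n`, `1 < l₁ ≤ ⋯ ≤ l_s ≤ n` with
`k_j < l_j`, `l_j - k_j + 1 ≥ m`.  Let `f' = X_{1c₁}⋯X_{mc_m}` be a diagonal monomial
of `Y_{k₁l₁}`, `c₀ = k₁ - 1`.  Suppose `f = monomial α 1` and `p = monomial β 1` are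
monomials with `f·f' = g₁⋯g_s·p`, where `g_j` is a diagonal monomial of `Y_{k_j l_j}`.
Then either (i) some variable `X_{ib}` with `1 ≤ i ≤ m`, `c_{i-1} < b < c_i` divides
`f`, or (ii) there are diagonal monomials `h_j` of `Y_{k_j l_j}` with
`g₁⋯g_s = h₁⋯h_s` and `gcd(f', g₁⋯g_s) ∣ h₁`. -/
theorem stmt_8 (K : Type*) [Field K] (m n s : ℕ) (hm : 1 ≤ m) (hmn : m ≤ n) (hs : 2 ≤ s)
    (k l : ℕ → ℕ)
    (hk1 : 1 ≤ k 1) (hkmono : ∀ j, 1 ≤ j → j < s → k j ≤ k (j + 1)) (hks : k s < n)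
    (hl1 : 1 < l 1) (hlmono : ∀ j, 1 ≤ j → j < s → l j ≤ l (j + 1)) (hls : l s ≤ n)
    (hkl : ∀ j, 1 ≤ j → j ≤ s → k j < l j)
    (hlen : ∀ j, 1 ≤ j → j ≤ s → m ≤ l j - k j + 1)
    (c : ℕ → ℕ) (hc : IsDiagSeq m (k 1) (l 1) c) (hc0 : c 0 = k 1 - 1)
    (g : ℕ → ℕ → ℕ) (hg : ∀ j, 1 ≤ j → j ≤ s → IsDiagSeq m (k j) (l j) (g j))
    (α β : (ℕ × ℕ) →₀ ℕ)
    (heq : (MvPolynomial.monomial α (1 : K)) * diagMon K m c =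
      (∏ j ∈ Finset.Icc 1 s, diagMon K m (g j)) * MvPolynomial.monomial β 1) :
    (∃ i b : ℕ, 1 ≤ i ∧ i ≤ m ∧ c (i - 1) < b ∧ b < c i ∧
        MvPolynomial.X (i, b) ∣ MvPolynomial.monomial α (1 : K)) ∨
    (∃ h : ℕ → ℕ → ℕ, (∀ j, 1 ≤ j → j ≤ s → IsDiagSeq m (k j) (l j) (h j)) ∧
        (∏ j ∈ Finset.Icc 1 s, diagMon K m (g j)) = (∏ j ∈ Finset.Icc 1 s, diagMon K m (h j)) ∧
        (MvPolynomial.monomial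
            (gcdExp (expVec m c) (∑ j ∈ Finset.Icc 1 s, expVec m (g j))) (1 : K)) ∣
          diagMon K m (h 1)) := by
  classical
  -- monotone chains for k and l
  have kchain : ∀ b a : ℕ, 1 ≤ a → a ≤ b → b ≤ s → k a ≤ k b := by
    intro b
    induction b with
    | zero => intro a ha hab _; omega
    | succ b ih =>
      intro a ha hab hbs
      rcases Nat.eq_or_lt_of_le hab with he | hlt
      · exact le_of_eq (by rw [he])
      · exact le_trans (ih a ha (by omega) (by omega)) (hkmono b (by omega) (by omega))
  have lchain : ∀ b a : ℕ, 1 ≤ a → a ≤ b → b ≤ s → l a ≤ l b := by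
    intro b
    induction b with
    | zero => intro a ha hab _; omega
    | succ b ih =>
      intro a ha hab hbs
      rcases Nat.eq_or_lt_of_le hab with he | hlt
      · exact le_of_eq (by rw [he])
      · exact le_trans (ih a ha (by omega) (by omega)) (hlmono b (by omega) (by omega))
  have hdiag : ∀ d : ℕ → ℕ, diagMon K m d = monomial (expVec m d) (1 : K) := by
    intro d
    rw [diagMon, expVec, monomial_sum_one]
    exact Finset.prod_congr rfl (fun i _ => rfl)
  have hprodM : ∀ G : ℕ → ℕ → ℕ, (∏ j ∈ Finset.Icc 1 s, diagMon K m (G j))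
      = monomial (∑ j ∈ Finset.Icc 1 s, expVec m (G j)) (1 : K) := by
    intro G
    rw [monomial_sum_one]
    exact Finset.prod_congr rfl (fun j _ => hdiag (G j))
  have hexp : α + expVec m c = (∑ j ∈ Finset.Icc 1 s, expVec m (g j)) + β := by
    rw [hdiag, hprodM, monomial_mul, monomial_mul, mul_one] at heq
    rcases (monomial_eq_monomial_iff _ _ _ _).mp heq with h | h
    · exact h.1
    · exact absurd h.1 one_ne_zero
  set G : (ℕ × ℕ) →₀ ℕ := ∑ j ∈ Finset.Icc 1 s, expVec m (g j) with hGdef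
  have hGapp : ∀ i b : ℕ,
      G (i, b) = ∑ j ∈ Finset.Icc 1 s, (if 1 ≤ i ∧ i ≤ m ∧ g j i = b then 1 else 0) := by
    intro i b
    rw [hGdef, Finsupp.finset_sum_apply]
    exact Finset.sum_congr rfl (fun j _ => expVec_apply m (g j) i b)
  rw [or_iff_not_imp_left]
  intro hnot
  push_neg at hnot
  have halpha0 : ∀ i b, 1 ≤ i → i ≤ m → c (i - 1) < b → b < c i → α (i, b) = 0 := by
    intro i b h1 h2 h3 h4
    by_contra hne
    apply hnot i b h1 h2 h3 h4
    have hle : Finsupp.single (i, b) 1 ≤ α := Finsupp.single_le_iff.mpr (by omega)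
    refine ⟨monomial (α - Finsupp.single (i, b) 1) 1, ?_⟩
    have hX : (X (i, b) : MvPolynomial (ℕ × ℕ) K)
        = monomial (Finsupp.single (i, b) 1) 1 := rfl
    rw [hX, monomial_mul, one_mul, add_tsub_cancel_of_le hle]
  have hmid : ∀ j, 1 ≤ j → j ≤ s → ∀ i, 1 ≤ i → i ≤ m →
      ¬ (c (i - 1) < g j i ∧ g j i < c i) := by
    intro j hj1 hjs i hi1 him hpair
    obtain ⟨hb1, hb2⟩ := hpair
    have h5 : α (i, g j i) + expVec m c (i, g j i) = G (i, g j i) + β (i, g j i) := by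
      have := congrArg (fun v : (ℕ × ℕ) →₀ ℕ => v (i, g j i)) hexp
      simpa using this
    have hcz : expVec m c (i, g j i) = 0 := by
      rw [expVec_apply, if_neg]
      rintro ⟨_, _, hcb⟩
      omega
    have hα := halpha0 i (g j i) hi1 him hb1 hb2
    have hGz : G (i, g j i) = 0 := by omega
    have hmem : j ∈ Finset.Icc 1 s := Finset.mem_Icc.mpr ⟨hj1, hjs⟩
    have hterm := (Finset.sum_eq_zero_iff.mp (by rw [← hGapp]; exact hGz)) j hmem
    rw [if_pos ⟨hi1, him, rfl⟩] at hterm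
    exact one_ne_zero hterm
  have hge : ∀ j, 1 ≤ j → j ≤ s → ∀ i, 1 ≤ i → i ≤ m → c i ≤ g j i := by
    intro j hj1 hjs i
    induction i with
    | zero => omega
    | succ i ih =>
      intro hi1 him
      by_contra hlt
      push_neg at hlt
      rcases Nat.eq_zero_or_pos i with h0 | hpos
      · subst h0
        have hk' : k j ≤ g j 1 := (hg j hj1 hjs).2.1
        have hkk : k 1 ≤ k j := kchain j 1 le_rfl hj1 hjs
        refine hmid j hj1 hjs 1 le_rfl him ⟨?_, ?_⟩
        · show c 0 < g j 1; omega
        · simpa using hlt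
      · have hih := ih (by omega) (by omega)
        have hstep : g j i < g j (i + 1) := (hg j hj1 hjs).1 i hpos (by omega)
        refine hmid j hj1 hjs (i + 1) (by omega) him ⟨?_, hlt⟩
        rw [Nat.add_sub_cancel]
        omega
  have hspos : 0 < s := by omega
  set Gt : ℕ → Fin s → ℕ := fun i t => g (t.1 + 1) i with hGt
  set H : ℕ → ℕ → ℕ :=
    fun j i => if hj : j - 1 < s then Gt i (Tuple.sort (Gt i) ⟨j - 1, hj⟩) else 0 with hHdef
  have hHval : ∀ j i (hj1 : 1 ≤ j) (hjs : j ≤ s),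
      H j i = Gt i (Tuple.sort (Gt i) ⟨j - 1, by omega⟩) := by
    intro j i hj1 hjs
    simp only [hHdef]
    rw [dif_pos (show j - 1 < s by omega)]
  have hGtlb : ∀ (i : ℕ), 1 ≤ i → i ≤ m → ∀ t : Fin s, c i ≤ Gt i t := by
    intro i hi1 him t
    have ht := t.isLt
    exact hge (t.1 + 1) (by omega) (by omega) i hi1 him
  refine ⟨H, ?_, ?_, ?_⟩
  · -- IsDiagSeq for each H j
    intro j hj1 hjs
    have hkj1 : 1 ≤ k j := le_trans hk1 (kchain j 1 le_rfl hj1 hjs)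
    refine ⟨?_, ?_, ?_⟩
    · intro i hi1 him
      rw [hHval j i hj1 hjs, hHval j (i + 1) hj1 hjs]
      set jf : Fin s := ⟨j - 1, by omega⟩
      set a := Gt (i + 1) (Tuple.sort (Gt (i + 1)) jf) with ha
      have hdom : ∀ t : Fin s, Gt i t < Gt (i + 1) t := by
        intro t
        have ht := t.isLt
        exact (hg (t.1 + 1) (by omega) (by omega)).1 i hi1 him
      have ha1 : 1 ≤ a := by
        have := hdom (Tuple.sort (Gt (i + 1)) jf)
        omega
      have hcard1 : j - 1 < Fintype.card {t // Gt (i + 1) t ≤ a} :=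
        (sortedLe_iff _ a jf).mp le_rfl
      have hinj : Fintype.card {t // Gt (i + 1) t ≤ a}
          ≤ Fintype.card {t // Gt i t ≤ a - 1} := by
        refine Fintype.card_le_of_injective
          (fun u => ⟨u.1, by have := hdom u.1; have := u.2; omega⟩) ?_
        intro u v huv
        have h' : u.1 = v.1 :=
          congrArg (fun x : {t : Fin s // Gt i t ≤ a - 1} => x.1) huv
        exact Subtype.ext h'
      have hfin : Gt i (Tuple.sort (Gt i) jf) ≤ a - 1 :=
        (sortedLe_iff _ _ jf).mpr (by rw [show (jf : ℕ) = j - 1 from rfl]; omega)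
      omega
    · rw [hHval j 1 hj1 hjs]
      by_contra hlt
      push_neg at hlt
      have hle : Gt 1 (Tuple.sort (Gt 1) ⟨j - 1, by omega⟩) ≤ k j - 1 := by omega
      have hcard := (sortedLe_iff _ _ _).mp hle
      have key : ∀ u : {t : Fin s // Gt 1 t ≤ k j - 1}, u.1.1 < j - 1 := by
        intro u
        by_contra hge'
        push_neg at hge'
        have hu := u.1.isLt
        have h1 : k (u.1.1 + 1) ≤ Gt 1 u.1 := (hg (u.1.1 + 1) (by omega) (by omega)).2.1
        have h2 : k j ≤ k (u.1.1 + 1) := kchain (u.1.1 + 1) j hj1 (by omega) (by omega)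
        have := u.2
        omega
      have hinj : Fintype.card {t : Fin s // Gt 1 t ≤ k j - 1} ≤ Fintype.card (Fin (j - 1)) := by
        refine Fintype.card_le_of_injective (fun u => ⟨u.1.1, key u⟩) ?_
        intro u v huv
        have h' : u.1.1 = v.1.1 := congrArg (fun x : Fin (j - 1) => x.1) huv
        exact Subtype.ext (Fin.ext h')
      rw [Fintype.card_fin] at hinj
      have hcard' : j - 1 < Fintype.card {t : Fin s // Gt 1 t ≤ k j - 1} := hcard
      omega
    · rw [hHval j m hj1 hjs]
      apply (sortedLe_iff _ _ _).mpr
      have hinj : Fintype.card (Fin j) ≤ Fintype.card {t : Fin s // Gt m t ≤ l j} := by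
        refine Fintype.card_le_of_injective
          (fun r => ⟨⟨r.1, by have := r.isLt; omega⟩, by
            have hr := r.isLt
            have h1 : Gt m ⟨r.1, by omega⟩ ≤ l (r.1 + 1) :=
              (hg (r.1 + 1) (by omega) (by omega)).2.2
            have h2 : l (r.1 + 1) ≤ l j := lchain j (r.1 + 1) (by omega) (by omega) hjs
            omega⟩) ?_
        intro u v huv
        exact Fin.ext (congrArg (fun x : {t : Fin s // Gt m t ≤ l j} => x.1.1) huv)
      rw [Fintype.card_fin] at hinj
      show j - 1 < _
      omega
  · -- products equal
    have hrw : ∀ (i : ℕ) (t : Fin s), H (t.1 + 1) i = Gt i (Tuple.sort (Gt i) t) := by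
      intro i t
      have ht := t.isLt
      rw [hHval (t.1 + 1) i (by omega) (by omega)]
      rfl
    have hsum : (∑ j ∈ Finset.Icc 1 s, expVec m (g j))
        = ∑ j ∈ Finset.Icc 1 s, expVec m (H j) := by
      simp only [expVec]
      rw [Finset.sum_comm]
      conv_rhs => rw [Finset.sum_comm]
      refine Finset.sum_congr rfl ?_
      intro i _
      rw [reindexIcc, reindexIcc]
      simp only [hrw]
      have hgt : ∀ t : Fin s, g (t.1 + 1) i = Gt i t := fun t => rfl
      simp only [hgt]
      exact (Equiv.sum_comp (Tuple.sort (Gt i)) (fun t => Finsupp.single (i, Gt i t) 1)).symm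
    rw [hprodM g, hprodM H, hsum]
  · -- gcd divides h 1
    have hgcdle : gcdExp (expVec m c) G ≤ expVec m (H 1) := by
      rw [Finsupp.le_def]
      intro p
      obtain ⟨a, b⟩ := p
      show min (expVec m c (a, b)) (G (a, b)) ≤ expVec m (H 1) (a, b)
      rw [expVec_apply m c a b]
      by_cases hcase : 1 ≤ a ∧ a ≤ m ∧ c a = b
      · rw [if_pos hcase]
        by_cases hGz : G (a, b) = 0
        · rw [hGz]
          simp
        · obtain ⟨j, hjmem, hne⟩ := Finset.exists_ne_zero_of_sum_ne_zero
            (show (∑ j ∈ Finset.Icc 1 s,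
                (if 1 ≤ a ∧ a ≤ m ∧ g j a = b then 1 else 0)) ≠ 0 by
              rw [← hGapp a b]; exact hGz)
          rw [Finset.mem_Icc] at hjmem
          have hgj : g j a = b := by
            by_contra hx
            exact hne (by rw [if_neg (by tauto)])
          have h2 : Gt a ⟨j - 1, by omega⟩ = g j a := by
            show g (j - 1 + 1) a = g j a
            congr 1
            omega
          have hja : Gt a ⟨j - 1, by omega⟩ ≤ c a :=
            le_of_eq (h2.trans (hgj.trans hcase.2.2.symm))
          have hH1 : H 1 a = c a := by
            rw [hHval 1 a le_rfl (by omega)]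
            refine le_antisymm ?_ (hGtlb a hcase.1 hcase.2.1 _)
            exact (sortedLe_iff _ _ _).mpr
              (Fintype.card_pos_iff.mpr ⟨⟨⟨j - 1, by omega⟩, hja⟩⟩)
          rw [expVec_apply m (H 1) a b,
            if_pos ⟨hcase.1, hcase.2.1, by rw [hH1, hcase.2.2]⟩]
          exact min_le_left _ _
      · rw [if_neg hcase]
        simp
    refine ⟨monomial (expVec m (H 1) - gcdExp (expVec m c) G) 1, ?_⟩
    rw [hdiag (H 1), monomial_mul, mul_one, add_tsub_cancel_of_le hgcdle]
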